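/- Let A be a unital C*-algebra, let x ∈ A be selfadjoint, and suppose there is a sequence (tₙ) of nonzero real numbers with tₙ → 0 such that exp(i·tₙ·x) lies in the center of A for every n. Then x lies in the center of A. -/

import Mathlib

open NormedSpace

/-- If `x` is selfadjoint in a unital C*-algebra and `exp (i * tₙ • x)` is central for a
sequence of nonzero reals `tₙ → 0`, then `x` is central. -/
theorem stmt_2 {A : Type*} [NormedRing A] [StarRing A] [CStarRing A]
    [NormedAlgebra ℂ A] [CompleteSpace A] [StarModule ℂ A]
    (x : A) (hx : IsSelfAdjoint x) (t : ℕ → ℝ)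
    (ht0 : ∀ n, t n ≠ 0) (htlim : Filter.Tendsto t Filter.atTop (nhds 0))
    (hcentral : ∀ n, exp ((Complex.I * (t n : ℂ)) • x) ∈ Set.center A) :
    x ∈ Set.center A := by
  rw [Semigroup.mem_center_iff]
  intro a
  set z : ℕ → ℂ := fun n => Complex.I * (t n : ℂ) with hz
  have hzne : ∀ n, z n ≠ 0 := fun n =>
    mul_ne_zero Complex.I_ne_zero (by exact_mod_cast ht0 n)
  have hzlim : Filter.Tendsto z Filter.atTop (nhds 0) := by
    have : Filter.Tendsto (fun n => ((t n : ℂ))) Filter.atTop (nhds (0 : ℂ)) := by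
      simpa [Function.comp_def] using (Complex.continuous_ofReal.continuousAt.tendsto.comp htlim)
    simpa using this.const_mul Complex.I
  have hzlim' : Filter.Tendsto z Filter.atTop (nhdsWithin 0 {(0 : ℂ)}ᶜ) :=
    tendsto_nhdsWithin_iff.mpr ⟨hzlim, Filter.Eventually.of_forall hzne⟩
  have hderiv : HasDerivAt (fun w : ℂ => exp (w • x)) x 0 := by
    simpa using hasDerivAt_exp_smul_const (𝕂 := ℂ) x (0 : ℂ)
  have hslope : Filter.Tendsto (fun n => slope (fun w : ℂ => exp (w • x)) 0 (z n))
      Filter.atTop (nhds x) :=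
    (hasDerivAt_iff_tendsto_slope.mp hderiv).comp hzlim'
  set s : ℕ → A := fun n => slope (fun w : ℂ => exp (w • x)) 0 (z n) with hs
  have hseq : ∀ n, s n = (z n)⁻¹ • (exp ((z n) • x) - 1) := by
    intro n
    simp [hs, slope_def_module, sub_zero, exp_zero]
  have hcomm : ∀ n, a * s n = s n * a := by
    intro n
    have he : a * exp ((z n) • x) = exp ((z n) • x) * a :=
      Semigroup.mem_center_iff.mp (hcentral n) a
    rw [hseq n, mul_smul_comm, smul_mul_assoc, mul_sub, sub_mul, he, mul_one, one_mul]
  have h1 : Filter.Tendsto (fun n => a * s n) Filter.atTop (nhds (a * x)) :=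
    hslope.const_mul a
  have h2 : Filter.Tendsto (fun n => s n * a) Filter.atTop (nhds (x * a)) :=
    hslope.mul_const a
  have : Filter.Tendsto (fun n => a * s n) Filter.atTop (nhds (x * a)) := by
    simpa only [hcomm] using h2
  exact tendsto_nhds_unique h1 this
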